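/- For every weight vector (w_1, …, w_K) of real numbers with Σ_{k=1}^K w_k = 1, the convex/affine combination of the pattern-specific identifying functionals recovers the potential-outcome mean in the target population: Σ_{k=1}^K w_k · ψ_k(a) = E[Y_a | S = 0], where ψ_k(a) = Σ_x ℙ(π_k(Z) = x | S = 0) · E[Y | π_k(Z) = x, A = a, S ∈ 𝒮^k]. -/
import Mathlib


open Finset

attribute [local instance] Classical.propDecidable

variable {Ω : Type*}

/-- Probability of an event. -/
noncomputable def pr [Fintype Ω] (P : Ω → ℝ) (E : Ω → Prop) : ℝ :=
  ∑ ω, if E ω then P ω else 0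

/-- Expectation of a real random variable. -/
noncomputable def ex [Fintype Ω] (P : Ω → ℝ) (Z : Ω → ℝ) : ℝ :=
  ∑ ω, P ω * Z ω

/-- Conditional probability ℙ(F | E) = ℙ(F ∩ E)/ℙ(E). -/
noncomputable def cpr [Fintype Ω] (P : Ω → ℝ) (F E : Ω → Prop) : ℝ :=
  pr P (fun ω => F ω ∧ E ω) / pr P E

/-- Conditional expectation E[Z | E] = E[Z·1_E]/ℙ(E). -/
noncomputable def cex [Fintype Ω] (P : Ω → ℝ) (Z : Ω → ℝ) (E : Ω → Prop) : ℝ :=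
  (∑ ω, if E ω then P ω * Z ω else 0) / pr P E

section Aux
variable [Fintype Ω] (P : Ω → ℝ)

lemma pr_nonneg (hP0 : ∀ ω, 0 ≤ P ω) (E : Ω → Prop) : 0 ≤ pr P E :=
  Finset.sum_nonneg fun ω _ => by by_cases h : E ω <;> simp [pr, h, hP0 ω]

lemma pr_mono (hP0 : ∀ ω, 0 ≤ P ω) {E F : Ω → Prop} (h : ∀ ω, E ω → F ω) :
    pr P E ≤ pr P F := by
  refine Finset.sum_le_sum fun ω _ => ?_
  by_cases hE : E ω
  · simp [hE, h ω hE]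
  · by_cases hF : F ω <;> simp [hE, hF, hP0 ω]

lemma pr_congr {E F : Ω → Prop} (h : ∀ ω, E ω ↔ F ω) : pr P E = pr P F :=
  Finset.sum_congr rfl fun ω _ => by rw [if_congr (h ω) rfl rfl]

lemma num_eq_zero (hP0 : ∀ ω, 0 ≤ P ω) {E : Ω → Prop} (h : pr P E = 0) (W : Ω → ℝ) :
    (∑ ω, if E ω then P ω * W ω else 0) = 0 := by
  have hz : ∀ ω, E ω → P ω = 0 := by
    intro ω hE
    have := (Finset.sum_eq_zero_iff_of_nonneg
      (fun ω _ => by by_cases h : E ω <;> simp [h, hP0 ω])).mp h ω (mem_univ ω)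
    simpa [hE] using this
  refine Finset.sum_eq_zero fun ω _ => ?_
  by_cases hE : E ω <;> simp [hE, hz ω]

lemma cex_zero (hP0 : ∀ ω, 0 ≤ P ω) {E : Ω → Prop} (h : pr P E = 0) (W : Ω → ℝ) :
    cex P W E = 0 := by
  unfold cex
  rw [num_eq_zero P hP0 h W, zero_div]

lemma cex_mul_pr (hP0 : ∀ ω, 0 ≤ P ω) (W : Ω → ℝ) (E : Ω → Prop) :
    cex P W E * pr P E = ∑ ω, if E ω then P ω * W ω else 0 := by
  unfold cex
  by_cases h : pr P E = 0
  · rw [h, mul_zero, num_eq_zero P hP0 h W]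
  · field_simp

lemma num_eq_sum (W : Ω → ℝ) (E : Ω → Prop) (T : Finset ℝ) (hT : ∀ ω, W ω ∈ T) :
    (∑ ω, if E ω then P ω * W ω else 0)
      = ∑ y ∈ T, y * pr P (fun ω => W ω = y ∧ E ω) := by
  calc (∑ ω, if E ω then P ω * W ω else 0)
      = ∑ ω, ∑ y ∈ T, (if W ω = y ∧ E ω then y * P ω else 0) := by
        refine Finset.sum_congr rfl fun ω _ => ?_
        by_cases hE : E ω
        · rw [Finset.sum_eq_single (W ω)]
          · simp [hE, mul_comm]
          · intro y _ hy
            have : ¬ (W ω = y) := fun h => hy h.symm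
            simp [this]
          · intro h; exact absurd (hT ω) h
        · simp [hE]
    _ = ∑ y ∈ T, ∑ ω, (if W ω = y ∧ E ω then y * P ω else 0) := Finset.sum_comm
    _ = ∑ y ∈ T, y * pr P (fun ω => W ω = y ∧ E ω) := by
        refine Finset.sum_congr rfl fun y _ => ?_
        unfold pr
        rw [Finset.mul_sum]
        refine Finset.sum_congr rfl fun ω _ => ?_
        by_cases h : W ω = y ∧ E ω <;> simp [h]

lemma cex_eq_sum (W : Ω → ℝ) (E : Ω → Prop) (T : Finset ℝ) (hT : ∀ ω, W ω ∈ T) :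
    cex P W E = ∑ y ∈ T, y * cpr P (fun ω => W ω = y) E := by
  unfold cex
  rw [num_eq_sum P W E T hT, Finset.sum_div]
  exact Finset.sum_congr rfl fun y _ => mul_div_assoc _ _ _

lemma pr_split {ι : Type*} [Fintype ι] (V : Ω → ι) (T : Finset ι) (E : Ω → Prop) :
    pr P (fun ω => V ω ∈ T ∧ E ω) = ∑ s ∈ T, pr P (fun ω => V ω = s ∧ E ω) := by
  unfold pr
  rw [Finset.sum_comm]
  refine Finset.sum_congr rfl fun ω _ => ?_
  by_cases hE : E ω
  · by_cases hm : V ω ∈ T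
    · rw [Finset.sum_eq_single (V ω)]
      · simp [hE, hm]
      · intro s _ hs
        have : ¬ (V ω = s) := fun h => hs h.symm
        simp [this]
      · intro h; exact absurd hm h
    · rw [Finset.sum_eq_zero]
      · simp [hm]
      · intro s hs
        have : ¬ (V ω = s) := fun h => hm (h ▸ hs)
        simp [this]
  · simp [hE]

/-- law of total expectation -/
lemma total_exp (hP0 : ∀ ω, 0 ≤ P ω) (W : Ω → ℝ) (E : Ω → Prop)
    {𝒵 : Type*} [Fintype 𝒵] (Z : Ω → 𝒵) :
    cex P W E = ∑ z, cpr P (fun ω => Z ω = z) E * cex P W (fun ω => Z ω = z ∧ E ω) := by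
  have key : ∀ z : 𝒵, cpr P (fun ω => Z ω = z) E * cex P W (fun ω => Z ω = z ∧ E ω)
      = (cex P W (fun ω => Z ω = z ∧ E ω) * pr P (fun ω => Z ω = z ∧ E ω)) / pr P E := by
    intro z; unfold cpr; ring
  rw [Finset.sum_congr rfl fun z _ => key z,
      Finset.sum_congr rfl fun z _ =>
        congrArg (· / pr P E) (cex_mul_pr P hP0 W (fun ω => Z ω = z ∧ E ω)),
      ← Finset.sum_div]
  unfold cex
  congr 1
  rw [Finset.sum_comm]
  refine Finset.sum_congr rfl fun ω _ => ?_
  by_cases hE : E ω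
  · rw [Finset.sum_eq_single (Z ω)]
    · simp [hE]
    · intro z _ hz
      have : ¬ (Z ω = z) := fun h => hz h.symm
      simp [this]
    · intro h; exact absurd (mem_univ (Z ω)) h
  · simp [hE]

/-- grouping a sum by fibers of g -/
lemma sum_fiber {ι κ M : Type*} [Fintype ι] [Fintype κ] [AddCommMonoid M]
    (g : ι → κ) (f : ι → M) :
    (∑ j, ∑ i ∈ univ.filter fun i => g i = j, f i) = ∑ i, f i := by
  simp only [Finset.sum_filter]
  rw [Finset.sum_comm]
  refine Finset.sum_congr rfl fun i _ => ?_
  rw [Finset.sum_eq_single (g i)]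
  · simp
  · intro j _ hj
    have : ¬ (g i = j) := fun h => hj h.symm
    simp [this]
  · intro h; exact absurd (mem_univ (g i)) h

/-- conditional independence, multiplied out -/
lemma indep_mul (F F1 F2 E : Ω → Prop) (hE : pr P E ≠ 0)
    (h : cpr P F E = cpr P F1 E * cpr P F2 E) :
    pr P (fun ω => F ω ∧ E ω) * pr P E
      = pr P (fun ω => F1 ω ∧ E ω) * pr P (fun ω => F2 ω ∧ E ω) := by
  unfold cpr at h
  rw [div_mul_div_comm, div_eq_div_iff hE (mul_ne_zero hE hE)] at h
  apply mul_right_cancel₀ hE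
  calc pr P (fun ω => F ω ∧ E ω) * pr P E * pr P E
      = pr P (fun ω => F ω ∧ E ω) * (pr P E * pr P E) := by ring
    _ = pr P (fun ω => F1 ω ∧ E ω) * pr P (fun ω => F2 ω ∧ E ω) * pr P E := h

end Aux

/-- Any affine combination (weights summing to one) of the pattern-specific
identifying functionals recovers the potential-outcome mean in the target population. -/
theorem weighted_combination_identification
    {𝒵 𝒯 : Type*} [Fintype Ω] [Fintype 𝒵] [Fintype 𝒯]
    (L K : ℕ) (𝒳 : Fin K → Type*) [∀ k, Fintype (𝒳 k)]
    (P : Ω → ℝ) (hP0 : ∀ ω, 0 ≤ P ω) (hP1 : ∑ ω, P ω = 1)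
    (S : Ω → Fin (L + 1)) (𝒮 : Fin K → Finset (Fin (L + 1)))
    -- the patterns partition the trials 1, …, L
    (h𝒮ne : ∀ k, (𝒮 k).Nonempty)
    (h𝒮0 : ∀ k, (0 : Fin (L + 1)) ∉ 𝒮 k)
    (h𝒮disj : ∀ k j, k ≠ j → Disjoint (𝒮 k) (𝒮 j))
    (h𝒮union : ∀ s : Fin (L + 1), s ≠ 0 → ∃ k, s ∈ 𝒮 k)
    (Z : Ω → 𝒵) (π : ∀ k, 𝒵 → 𝒳 k)
    (A : Ω → 𝒯) (a : 𝒯) (Y Ya : Ω → ℝ)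
    -- (A1) consistency
    (hA1 : ∀ ω, A ω = a → Y ω = Ya ω)
    -- (A2) within-pattern exchangeability over treatment
    (hA2 : ∀ k : Fin K, ∀ z a' y, 0 < pr P (fun ω => Z ω = z ∧ S ω ∈ 𝒮 k) →
      cpr P (fun ω => Ya ω = y ∧ A ω = a') (fun ω => Z ω = z ∧ S ω ∈ 𝒮 k)
        = cpr P (fun ω => Ya ω = y) (fun ω => Z ω = z ∧ S ω ∈ 𝒮 k)
          * cpr P (fun ω => A ω = a') (fun ω => Z ω = z ∧ S ω ∈ 𝒮 k))
    -- (A4) transportability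
    (hA4 : ∀ z s y, 0 < pr P (fun ω => Z ω = z) →
      cpr P (fun ω => Ya ω = y ∧ S ω = s) (fun ω => Z ω = z)
        = cpr P (fun ω => Ya ω = y) (fun ω => Z ω = z)
          * cpr P (fun ω => S ω = s) (fun ω => Z ω = z))
    -- (A6) outcome independent of the pattern-k missing covariates
    (hA6 : ∀ k : Fin K, ∀ x : 𝒳 k,
      0 < pr P (fun ω => π k (Z ω) = x ∧ S ω ∈ 𝒮 k ∧ A ω = a) →
      ∀ z, π k z = x → 0 < pr P (fun ω => Z ω = z ∧ S ω ∈ 𝒮 k ∧ A ω = a) →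
      ∀ y, cpr P (fun ω => Y ω = y) (fun ω => Z ω = z ∧ S ω ∈ 𝒮 k ∧ A ω = a)
        = cpr P (fun ω => Y ω = y) (fun ω => π k (Z ω) = x ∧ S ω ∈ 𝒮 k ∧ A ω = a))
    -- positivity
    (hposT : 0 < pr P (fun ω => S ω = 0))
    (hpos : ∀ k : Fin K, ∀ z, 0 < pr P (fun ω => Z ω = z ∧ S ω = 0) →
      0 < pr P (fun ω => A ω = a ∧ Z ω = z ∧ S ω ∈ 𝒮 k))
    -- weights summing to one
    (w : Fin K → ℝ) (hw : ∑ k, w k = 1) :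
    ∑ k, w k *
        (∑ x : 𝒳 k,
          cpr P (fun ω => π k (Z ω) = x) (fun ω => S ω = 0)
            * cex P Y (fun ω => π k (Z ω) = x ∧ A ω = a ∧ S ω ∈ 𝒮 k))
      = cex P Ya (fun ω => S ω = 0) := by
  -- it suffices to prove the identification for each pattern k
  suffices hk : ∀ k : Fin K,
      (∑ x : 𝒳 k,
          cpr P (fun ω => π k (Z ω) = x) (fun ω => S ω = 0)
            * cex P Y (fun ω => π k (Z ω) = x ∧ A ω = a ∧ S ω ∈ 𝒮 k))
        = cex P Ya (fun ω => S ω = 0) by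
    calc ∑ k, w k *
          (∑ x : 𝒳 k,
            cpr P (fun ω => π k (Z ω) = x) (fun ω => S ω = 0)
              * cex P Y (fun ω => π k (Z ω) = x ∧ A ω = a ∧ S ω ∈ 𝒮 k))
        = ∑ k, w k * cex P Ya (fun ω => S ω = 0) :=
          Finset.sum_congr rfl fun k _ => by rw [hk k]
      _ = (∑ k, w k) * cex P Ya (fun ω => S ω = 0) := by rw [Finset.sum_mul]
      _ = cex P Ya (fun ω => S ω = 0) := by rw [hw, one_mul]
  intro k
  -- law of total expectation on the right-hand side
  have hR : cex P Ya (fun ω => S ω = 0)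
      = ∑ z, cpr P (fun ω => Z ω = z) (fun ω => S ω = 0)
          * cex P Ya (fun ω => Z ω = z ∧ S ω = 0) :=
    total_exp P hP0 Ya (fun ω => S ω = 0) Z
  -- fiber decomposition of the covariate-shift weights
  have hfib : ∀ x : 𝒳 k,
      cpr P (fun ω => π k (Z ω) = x) (fun ω => S ω = 0)
        = ∑ z ∈ univ.filter (fun z => π k z = x),
            cpr P (fun ω => Z ω = z) (fun ω => S ω = 0) := by
    intro x
    simp only [cpr]
    rw [← Finset.sum_div]
    congr 1
    have h1 : pr P (fun ω => π k (Z ω) = x ∧ S ω = 0)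
        = pr P (fun ω => Z ω ∈ univ.filter (fun z => π k z = x) ∧ S ω = 0) :=
      pr_congr P fun ω => by simp
    have h2 : pr P (fun ω => Z ω ∈ univ.filter (fun z => π k z = x) ∧ S ω = 0)
        = ∑ z ∈ univ.filter (fun z => π k z = x), pr P (fun ω => Z ω = z ∧ S ω = 0) :=
      pr_split P Z _ _
    rw [h1, h2]
  -- the core claim, for each covariate value z
  have hcore : ∀ z : 𝒵,
      cpr P (fun ω => Z ω = z) (fun ω => S ω = 0)
          * cex P Y (fun ω => π k (Z ω) = π k z ∧ A ω = a ∧ S ω ∈ 𝒮 k)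
        = cpr P (fun ω => Z ω = z) (fun ω => S ω = 0)
            * cex P Ya (fun ω => Z ω = z ∧ S ω = 0) := by
    intro z
    by_cases hq0 : pr P (fun ω => Z ω = z ∧ S ω = 0) = 0
    · have hc : cpr P (fun ω => Z ω = z) (fun ω => S ω = 0) = 0 := by
        simp only [cpr]
        rw [hq0, zero_div]
      rw [hc, zero_mul, zero_mul]
    · have hq0pos : 0 < pr P (fun ω => Z ω = z ∧ S ω = 0) :=
        lt_of_le_of_ne (pr_nonneg P hP0 _) (Ne.symm hq0)
      have hpz : 0 < pr P (fun ω => Z ω = z) :=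
        lt_of_lt_of_le hq0pos (pr_mono P hP0 fun ω h => h.1)
      have hqza : 0 < pr P (fun ω => Z ω = z ∧ S ω ∈ 𝒮 k ∧ A ω = a) := by
        rw [show pr P (fun ω => Z ω = z ∧ S ω ∈ 𝒮 k ∧ A ω = a)
            = pr P (fun ω => A ω = a ∧ Z ω = z ∧ S ω ∈ 𝒮 k) from
          pr_congr P fun ω => by tauto]
        exact hpos k z hq0pos
      have hqk : 0 < pr P (fun ω => Z ω = z ∧ S ω ∈ 𝒮 k) :=
        lt_of_lt_of_le hqza (pr_mono P hP0 fun ω h => ⟨h.1, h.2.1⟩)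
      have hqx : 0 < pr P (fun ω => π k (Z ω) = π k z ∧ S ω ∈ 𝒮 k ∧ A ω = a) :=
        lt_of_lt_of_le hqza (pr_mono P hP0 fun ω h => ⟨by rw [h.1], h.2.1, h.2.2⟩)
      congr 1
      -- compare the conditional expectations value by value
      rw [cex_eq_sum P Y _ ((Finset.image Y Finset.univ) ∪ (Finset.image Ya Finset.univ))
            (fun ω => Finset.mem_union_left _ (Finset.mem_image_of_mem Y (Finset.mem_univ ω))),
          cex_eq_sum P Ya _ ((Finset.image Y Finset.univ) ∪ (Finset.image Ya Finset.univ))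
            (fun ω => Finset.mem_union_right _ (Finset.mem_image_of_mem Ya (Finset.mem_univ ω)))]
      refine Finset.sum_congr rfl fun y _ => ?_
      congr 1
      -- per-value chain of conditional probability identities
      simp only [cpr]
      -- reorder the conjunctions on the left-hand side
      rw [show pr P (fun ω => Y ω = y ∧ (π k (Z ω) = π k z ∧ A ω = a ∧ S ω ∈ 𝒮 k))
          = pr P (fun ω => Y ω = y ∧ (π k (Z ω) = π k z ∧ S ω ∈ 𝒮 k ∧ A ω = a)) from
        pr_congr P fun ω => by tauto]
      rw [show pr P (fun ω => π k (Z ω) = π k z ∧ A ω = a ∧ S ω ∈ 𝒮 k)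
          = pr P (fun ω => π k (Z ω) = π k z ∧ S ω ∈ 𝒮 k ∧ A ω = a) from
        pr_congr P fun ω => by tauto]
      -- step 1: transportability at s = 0
      have e1 : pr P (fun ω => Ya ω = y ∧ (Z ω = z ∧ S ω = 0))
            / pr P (fun ω => Z ω = z ∧ S ω = 0)
          = pr P (fun ω => Ya ω = y ∧ Z ω = z) / pr P (fun ω => Z ω = z) := by
        rw [div_eq_div_iff hq0pos.ne' hpz.ne']
        have h : pr P (fun ω => (Ya ω = y ∧ S ω = 0) ∧ Z ω = z) * pr P (fun ω => Z ω = z)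
            = pr P (fun ω => Ya ω = y ∧ Z ω = z) * pr P (fun ω => S ω = 0 ∧ Z ω = z) :=
          indep_mul P _ _ _ _ hpz.ne' (hA4 z 0 y hpz)
        rw [show pr P (fun ω => (Ya ω = y ∧ S ω = 0) ∧ Z ω = z)
              = pr P (fun ω => Ya ω = y ∧ (Z ω = z ∧ S ω = 0)) from
            pr_congr P fun ω => by tauto,
          show pr P (fun ω => S ω = 0 ∧ Z ω = z)
              = pr P (fun ω => Z ω = z ∧ S ω = 0) from
            pr_congr P fun ω => by tauto] at h
        exact h
      -- step 2: transportability summed over the pattern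
      have e2 : pr P (fun ω => Ya ω = y ∧ Z ω = z) / pr P (fun ω => Z ω = z)
          = pr P (fun ω => Ya ω = y ∧ (Z ω = z ∧ S ω ∈ 𝒮 k))
              / pr P (fun ω => Z ω = z ∧ S ω ∈ 𝒮 k) := by
        rw [div_eq_div_iff hpz.ne' hqk.ne']
        have hs : ∀ s : Fin (L + 1),
            pr P (fun ω => S ω = s ∧ (Ya ω = y ∧ Z ω = z)) * pr P (fun ω => Z ω = z)
              = pr P (fun ω => Ya ω = y ∧ Z ω = z) * pr P (fun ω => S ω = s ∧ Z ω = z) := by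
          intro s
          have h : pr P (fun ω => (Ya ω = y ∧ S ω = s) ∧ Z ω = z) * pr P (fun ω => Z ω = z)
              = pr P (fun ω => Ya ω = y ∧ Z ω = z) * pr P (fun ω => S ω = s ∧ Z ω = z) :=
            indep_mul P _ _ _ _ hpz.ne' (hA4 z s y hpz)
          rw [show pr P (fun ω => S ω = s ∧ (Ya ω = y ∧ Z ω = z))
                = pr P (fun ω => (Ya ω = y ∧ S ω = s) ∧ Z ω = z) from
            pr_congr P fun ω => by tauto]
          exact h
        have hsplit1 : pr P (fun ω => S ω ∈ 𝒮 k ∧ (Ya ω = y ∧ Z ω = z))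
            = ∑ s ∈ 𝒮 k, pr P (fun ω => S ω = s ∧ (Ya ω = y ∧ Z ω = z)) :=
          pr_split P S (𝒮 k) _
        have hsplit2 : pr P (fun ω => S ω ∈ 𝒮 k ∧ Z ω = z)
            = ∑ s ∈ 𝒮 k, pr P (fun ω => S ω = s ∧ Z ω = z) :=
          pr_split P S (𝒮 k) _
        rw [show pr P (fun ω => Ya ω = y ∧ (Z ω = z ∧ S ω ∈ 𝒮 k))
              = pr P (fun ω => S ω ∈ 𝒮 k ∧ (Ya ω = y ∧ Z ω = z)) from
            pr_congr P fun ω => by tauto,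
          show pr P (fun ω => Z ω = z ∧ S ω ∈ 𝒮 k)
              = pr P (fun ω => S ω ∈ 𝒮 k ∧ Z ω = z) from
            pr_congr P fun ω => by tauto,
          hsplit1, hsplit2, Finset.mul_sum, Finset.sum_mul]
        exact (Finset.sum_congr rfl fun s _ => hs s).symm
      -- step 3: exchangeability over treatment and consistency
      have e3 : pr P (fun ω => Ya ω = y ∧ (Z ω = z ∧ S ω ∈ 𝒮 k))
            / pr P (fun ω => Z ω = z ∧ S ω ∈ 𝒮 k)
          = pr P (fun ω => Y ω = y ∧ (Z ω = z ∧ S ω ∈ 𝒮 k ∧ A ω = a))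
              / pr P (fun ω => Z ω = z ∧ S ω ∈ 𝒮 k ∧ A ω = a) := by
        rw [div_eq_div_iff hqk.ne' hqza.ne']
        have h : pr P (fun ω => (Ya ω = y ∧ A ω = a) ∧ (Z ω = z ∧ S ω ∈ 𝒮 k))
              * pr P (fun ω => Z ω = z ∧ S ω ∈ 𝒮 k)
            = pr P (fun ω => Ya ω = y ∧ (Z ω = z ∧ S ω ∈ 𝒮 k))
              * pr P (fun ω => A ω = a ∧ (Z ω = z ∧ S ω ∈ 𝒮 k)) :=
          indep_mul P _ _ _ _ hqk.ne' (hA2 k z a y hqk)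
        rw [show pr P (fun ω => (Ya ω = y ∧ A ω = a) ∧ (Z ω = z ∧ S ω ∈ 𝒮 k))
              = pr P (fun ω => Y ω = y ∧ (Z ω = z ∧ S ω ∈ 𝒮 k ∧ A ω = a)) from
            pr_congr P fun ω =>
              ⟨fun h => ⟨(hA1 ω h.1.2).trans h.1.1, h.2.1, h.2.2, h.1.2⟩,
               fun h => ⟨⟨(hA1 ω h.2.2.2).symm.trans h.1, h.2.2.2⟩, h.2.1, h.2.2.1⟩⟩,
          show pr P (fun ω => A ω = a ∧ (Z ω = z ∧ S ω ∈ 𝒮 k))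
              = pr P (fun ω => Z ω = z ∧ S ω ∈ 𝒮 k ∧ A ω = a) from
            pr_congr P fun ω => by tauto] at h
        exact h.symm
      -- step 4: coarsening to the observed covariates (A6)
      have e4 : pr P (fun ω => Y ω = y ∧ (Z ω = z ∧ S ω ∈ 𝒮 k ∧ A ω = a))
            / pr P (fun ω => Z ω = z ∧ S ω ∈ 𝒮 k ∧ A ω = a)
          = pr P (fun ω => Y ω = y ∧ (π k (Z ω) = π k z ∧ S ω ∈ 𝒮 k ∧ A ω = a))
              / pr P (fun ω => π k (Z ω) = π k z ∧ S ω ∈ 𝒮 k ∧ A ω = a) :=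
        hA6 k (π k z) hqx z rfl hqza y
      exact (e1.trans ((e2.trans e3).trans e4)).symm
  -- assemble
  calc ∑ x : 𝒳 k,
        cpr P (fun ω => π k (Z ω) = x) (fun ω => S ω = 0)
          * cex P Y (fun ω => π k (Z ω) = x ∧ A ω = a ∧ S ω ∈ 𝒮 k)
      = ∑ x : 𝒳 k, ∑ z ∈ univ.filter (fun z => π k z = x),
          cpr P (fun ω => Z ω = z) (fun ω => S ω = 0)
            * cex P Y (fun ω => π k (Z ω) = x ∧ A ω = a ∧ S ω ∈ 𝒮 k) := by
        refine Finset.sum_congr rfl fun x _ => ?_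
        rw [hfib x, Finset.sum_mul]
    _ = ∑ x : 𝒳 k, ∑ z ∈ univ.filter (fun z => π k z = x),
          cpr P (fun ω => Z ω = z) (fun ω => S ω = 0)
            * cex P Y (fun ω => π k (Z ω) = π k z ∧ A ω = a ∧ S ω ∈ 𝒮 k) := by
        refine Finset.sum_congr rfl fun x _ => Finset.sum_congr rfl fun z hz => ?_
        rw [(Finset.mem_filter.mp hz).2]
    _ = ∑ z, cpr P (fun ω => Z ω = z) (fun ω => S ω = 0)
          * cex P Y (fun ω => π k (Z ω) = π k z ∧ A ω = a ∧ S ω ∈ 𝒮 k) :=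
        sum_fiber (π k) _
    _ = ∑ z, cpr P (fun ω => Z ω = z) (fun ω => S ω = 0)
          * cex P Ya (fun ω => Z ω = z ∧ S ω = 0) :=
        Finset.sum_congr rfl fun z _ => hcore z
    _ = cex P Ya (fun ω => S ω = 0) := hR.symm
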